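/- Theorem 2 (Completeness/optimality of PoLoc, achievability). Let n be a natural number, C : Fin n → E, d̂ : Fin n → ℝ and P̃ ∈ E with ‖C i − P̃‖ ≤ d̂ i for every i. Fix a unit vector u and an index i⋆ ∈ Fin n, and set ρ := R(C i⋆, d̂ i⋆, P̃, u) and P := P̃ + ρ • u. Then: (a) dist P P̃ = ρ; (b) dist (C i⋆) P = d̂ i⋆; and (c) for every j ∈ Fin n with ρ ≤ R(C j, d̂ j, P̃, u), dist (C j) P ≤ d̂ j. Hence a Waldo actually located at P is consistent with the measurements of every challenger whose directional uncertainty in direction u is at least ρ, and the uncertainty bound ρ is attained exactly. -/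

import Mathlib

/-- The plane. -/
local notation "E" => EuclideanSpace ℝ (Fin 2)

/-- Directional uncertainty `R(C, d̂, P̃, u) = s + sqrt (d̂² − d̃² + s²)`,
where `d̃ = ‖C − P̃‖` and `s = ⟪C − P̃, u⟫_ℝ`. -/
noncomputable def dirUnc (C Pt : EuclideanSpace ℝ (Fin 2)) (dhat : ℝ)
    (u : EuclideanSpace ℝ (Fin 2)) : ℝ :=
  (inner ℝ (C - Pt) u : ℝ) +
    Real.sqrt (dhat ^ 2 - ‖C - Pt‖ ^ 2 + (inner ℝ (C - Pt) u : ℝ) ^ 2)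

private lemma dirUnc_nonneg (Cv Pt : E) (d : ℝ) (u : E) (hd : ‖Cv - Pt‖ ≤ d) :
    0 ≤ dirUnc Cv Pt d u := by
  unfold dirUnc
  set s : ℝ := (inner ℝ (Cv - Pt) u : ℝ) with hs
  have ht : |s| ≤ Real.sqrt (d ^ 2 - ‖Cv - Pt‖ ^ 2 + s ^ 2) := by
    rw [← Real.sqrt_sq_eq_abs]
    apply Real.sqrt_le_sqrt
    nlinarith [norm_nonneg (Cv - Pt)]
  have := neg_abs_le s
  linarith

private lemma dist_sq_eq (Cv Pt u : E) (hu : ‖u‖ = 1) (ρ : ℝ) :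
    dist Cv (Pt + ρ • u) ^ 2
      = ‖Cv - Pt‖ ^ 2 - 2 * ρ * (inner ℝ (Cv - Pt) u : ℝ) + ρ ^ 2 := by
  rw [dist_eq_norm]
  have hsub : Cv - (Pt + ρ • u) = (Cv - Pt) - ρ • u := by abel
  rw [hsub, norm_sub_sq_real, real_inner_smul_right, norm_smul]
  simp [hu, mul_pow, sq_abs]
  ring

private lemma dist_sq_le (Cv Pt u : E) (hu : ‖u‖ = 1) (d ρ : ℝ)
    (hd : ‖Cv - Pt‖ ≤ d) (hρ0 : 0 ≤ ρ) (hρ : ρ ≤ dirUnc Cv Pt d u) :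
    dist Cv (Pt + ρ • u) ≤ d := by
  unfold dirUnc at hρ
  set s : ℝ := (inner ℝ (Cv - Pt) u : ℝ) with hs
  set t := Real.sqrt (d ^ 2 - ‖Cv - Pt‖ ^ 2 + s ^ 2) with hts
  have harg : 0 ≤ d ^ 2 - ‖Cv - Pt‖ ^ 2 + s ^ 2 := by
    nlinarith [norm_nonneg (Cv - Pt)]
  have ht2 : t ^ 2 = d ^ 2 - ‖Cv - Pt‖ ^ 2 + s ^ 2 := Real.sq_sqrt harg
  have htabs : |s| ≤ t := by
    rw [hts, ← Real.sqrt_sq_eq_abs]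
    apply Real.sqrt_le_sqrt
    nlinarith [norm_nonneg (Cv - Pt)]
  have hst : -s ≤ t := by have := neg_abs_le s; linarith
  have hst2 : s ≤ t := le_trans (le_abs_self s) htabs
  have hd0 : 0 ≤ d := le_trans (norm_nonneg _) hd
  have hsq : dist Cv (Pt + ρ • u) ^ 2 ≤ d ^ 2 := by
    rw [dist_sq_eq Cv Pt u hu ρ, ← hs]
    nlinarith [mul_nonneg (by linarith : (0:ℝ) ≤ ρ - (s - t))
      (by linarith : (0:ℝ) ≤ s + t - ρ)]
  have hdist0 : (0:ℝ) ≤ dist Cv (Pt + ρ • u) := dist_nonneg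
  nlinarith

/-- Theorem 2 (Completeness/optimality of PoLoc, achievability): a Waldo
actually located at `P := P̃ + ρ • u`, where `ρ` is the directional uncertainty
of challenger `i⋆` in direction `u`, (a) is exactly at distance `ρ` from the
claimed location, (b) is exactly at distance `d̂ i⋆` from challenger `i⋆`, and
(c) is consistent with the measurement of every challenger whose directional
uncertainty in direction `u` is at least `ρ`. -/
theorem poloc_completeness (n : ℕ) (C : Fin n → E) (dhat : Fin n → ℝ) (Pt : E)
    (h : ∀ i, ‖C i - Pt‖ ≤ dhat i) (u : E) (hu : ‖u‖ = 1) (istar : Fin n) :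
    let ρ : ℝ := dirUnc (C istar) Pt (dhat istar) u
    let P : E := Pt + ρ • u
    dist P Pt = ρ ∧ dist (C istar) P = dhat istar ∧
      ∀ j : Fin n, ρ ≤ dirUnc (C j) Pt (dhat j) u → dist (C j) P ≤ dhat j := by
  intro ρ P
  have hρ0 : 0 ≤ ρ := dirUnc_nonneg _ _ _ _ (h istar)
  refine ⟨?_, ?_, ?_⟩
  · have : P - Pt = ρ • u := by simp [P]
    rw [dist_eq_norm, this, norm_smul, hu]
    simp [abs_of_nonneg hρ0]
  · -- exact distance to challenger istar
    set s : ℝ := (inner ℝ (C istar - Pt) u : ℝ) with hs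
    set t := Real.sqrt ((dhat istar) ^ 2 - ‖C istar - Pt‖ ^ 2 + s ^ 2) with hts
    have harg : 0 ≤ (dhat istar) ^ 2 - ‖C istar - Pt‖ ^ 2 + s ^ 2 := by
      nlinarith [norm_nonneg (C istar - Pt), h istar]
    have ht2 : t ^ 2 = (dhat istar) ^ 2 - ‖C istar - Pt‖ ^ 2 + s ^ 2 :=
      Real.sq_sqrt harg
    have hρeq : ρ = s + t := rfl
    have hd0 : 0 ≤ dhat istar := le_trans (norm_nonneg _) (h istar)
    have hsq : dist (C istar) P ^ 2 = (dhat istar) ^ 2 := by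
      rw [show P = Pt + ρ • u from rfl, dist_sq_eq _ _ _ hu, ← hs, hρeq]
      nlinarith
    have hdist0 : (0:ℝ) ≤ dist (C istar) P := dist_nonneg
    rw [← Real.sqrt_sq hdist0, hsq, Real.sqrt_sq hd0]
  · intro j hj
    exact dist_sq_le (C j) Pt u hu (dhat j) ρ (h j) hρ0 hj
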